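/- Let p = 2d+1 and let c1 >= c2 be integers with 0 <= c2 <= c1 <= d-1. Then the number of pairs (a,b) of integers satisfying: 0 <= b <= d-a-1, c1-c2 <= a <= min(c1+c2, 2d-1-c1-c2), and a ≡ c1-c2+1 (mod 2), equals c2(d-c1). -/

import Mathlib

lemma sum_aux (M : ℕ) : ∀ N : ℕ, 2 * N ≤ M + 1 →
    ∑ k ∈ Finset.range N, (M - 2 * k) = N * (M + 1 - N) := by
  intro N
  induction N with
  | zero => simp
  | succ n ih =>
    intro h
    rw [Finset.sum_range_succ, ih (by omega)]
    have h1 : n ≤ M := by omega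
    have h2 : 2 * n ≤ M := by omega
    have h3 : n + 1 ≤ M + 1 := by omega
    have h4 : n ≤ M + 1 := by omega
    zify [h1, h2, h3, h4]
    ring

/-- The number of unbalanced colorings `η(c₁,c₂)` of the genus-one lollipop tree with two
boundary colors `2c₁`, `2c₂` equals `c₂(d-c₁)`.  A coloring is a pair `(a,b)` with
`0 ≤ b ≤ d-a-1`, `c₁-c₂ ≤ a ≤ min (c₁+c₂) (2d-1-c₁-c₂)` and `a ≡ c₁-c₂+1 (mod 2)`. -/
theorem unbalanced_count (d c1 c2 : ℕ) (hd : 2 ≤ d) (h21 : c2 ≤ c1) (h1d : c1 ≤ d - 1) :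
    ((Finset.range d ×ˢ Finset.range d).filter (fun ab : ℕ × ℕ =>
        ab.1 + ab.2 + 1 ≤ d ∧
        c1 - c2 ≤ ab.1 ∧ ab.1 ≤ min (c1 + c2) (2 * d - 1 - c1 - c2) ∧
        ab.1 % 2 = (c1 - c2 + 1) % 2)).card = c2 * (d - c1) := by
  rw [Finset.card_filter, Finset.sum_product]
  dsimp only
  have step1 : ∀ a ∈ Finset.range d,
      (∑ b ∈ Finset.range d, if a + b + 1 ≤ d ∧
          c1 - c2 ≤ a ∧ a ≤ min (c1 + c2) (2 * d - 1 - c1 - c2) ∧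
          a % 2 = (c1 - c2 + 1) % 2 then 1 else 0)
        = if (c1 - c2 ≤ a ∧ a ≤ min (c1 + c2) (2 * d - 1 - c1 - c2) ∧
          a % 2 = (c1 - c2 + 1) % 2) then d - a else 0 := by
    intro a _
    by_cases hra : c1 - c2 ≤ a ∧ a ≤ min (c1 + c2) (2 * d - 1 - c1 - c2) ∧
        a % 2 = (c1 - c2 + 1) % 2
    · rw [if_pos hra]
      have e1 : (∑ b ∈ Finset.range d, if a + b + 1 ≤ d ∧
            c1 - c2 ≤ a ∧ a ≤ min (c1 + c2) (2 * d - 1 - c1 - c2) ∧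
            a % 2 = (c1 - c2 + 1) % 2 then 1 else 0)
          = ((Finset.range d).filter (fun b => a + b + 1 ≤ d ∧
            c1 - c2 ≤ a ∧ a ≤ min (c1 + c2) (2 * d - 1 - c1 - c2) ∧
            a % 2 = (c1 - c2 + 1) % 2)).card := (Finset.card_filter _ _).symm
      rw [e1]
      have e2 : (Finset.range d).filter (fun b => a + b + 1 ≤ d ∧
            c1 - c2 ≤ a ∧ a ≤ min (c1 + c2) (2 * d - 1 - c1 - c2) ∧
            a % 2 = (c1 - c2 + 1) % 2) = Finset.range (d - a) := by
        ext b
        simp only [Finset.mem_filter, Finset.mem_range, hra.1, hra.2.1, hra.2.2,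
          and_true, true_and]
        omega
      rw [e2, Finset.card_range]
    · rw [if_neg hra]
      refine Finset.sum_eq_zero fun b _ => ?_
      rw [if_neg]
      tauto
  rw [Finset.sum_congr rfl step1, ← Finset.sum_filter]
  have key : (Finset.range d).filter (fun a => c1 - c2 ≤ a ∧
        a ≤ min (c1 + c2) (2 * d - 1 - c1 - c2) ∧ a % 2 = (c1 - c2 + 1) % 2)
      = (Finset.range (min c2 (d - c1))).image (fun k => (c1 - c2 + 1) + 2 * k) := by
    ext a
    simp only [Finset.mem_filter, Finset.mem_range, Finset.mem_image]
    constructor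
    · rintro ⟨h0, h1, h2, h3⟩
      exact ⟨(a - (c1 - c2 + 1)) / 2, by omega, by omega⟩
    · rintro ⟨k, hk, rfl⟩
      omega
  rw [key, Finset.sum_image (by intro x _ y _ h; beta_reduce at h; omega)]
  have heq : ∀ k ∈ Finset.range (min c2 (d - c1)),
      d - ((c1 - c2 + 1) + 2 * k) = (d - (c1 - c2 + 1)) - 2 * k := by
    intro k _; omega
  rw [Finset.sum_congr rfl heq, sum_aux (d - (c1 - c2 + 1)) (min c2 (d - c1)) (by omega)]
  rcases le_total c2 (d - c1) with hc | hc
  · have h1 : min c2 (d - c1) = c2 := min_eq_left hc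
    have h2 : d - (c1 - c2 + 1) + 1 - c2 = d - c1 := by omega
    rw [h1, h2]
  · have h1 : min c2 (d - c1) = d - c1 := min_eq_right hc
    have h2 : d - (c1 - c2 + 1) + 1 - (d - c1) = c2 := by omega
    rw [h1, h2, Nat.mul_comm]
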